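/- arXiv:1506.04804 — 3 statements merged into one kernel-verified Lean document; each statement's English description precedes it below -/
import Mathlib

section
/- For every natural number k, the (k+1)×(k+1) real matrix V with entries V_{a,b} = C(a+b, a)/(a+b+1)! (for 0 ≤ a, b ≤ k) is symmetric and positive definite. -/
open scoped Matrix

/-- The rescaled variance–covariance matrix of the generalized Kolmogorov diffusion:
`V a b = C(a+b, a) / (a+b+1)!`. -/
noncomputable def kolV (k : ℕ) : Matrix (Fin (k + 1)) (Fin (k + 1)) ℝ :=
  fun a b => (Nat.choose ((a : ℕ) + (b : ℕ)) (a : ℕ) : ℝ) /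
    (Nat.factorial ((a : ℕ) + (b : ℕ) + 1) : ℝ)

open Polynomial MeasureTheory intervalIntegral
open scoped Nat

lemma kolV_entry (k : ℕ) (a b : Fin (k+1)) :
    kolV k a b = 1 / (((a:ℕ)! : ℝ) * ((b:ℕ)! : ℝ) * (((a:ℕ) : ℝ) + ((b:ℕ) : ℝ) + 1)) := by
  have h1 : ((((a:ℕ) + (b:ℕ)).choose (a:ℕ) : ℕ) : ℝ)
      = (((a:ℕ) + (b:ℕ))! : ℝ) / (((a:ℕ)! : ℝ) * ((b:ℕ)! : ℝ)) := by
    rw [Nat.cast_choose ℝ (Nat.le_add_right _ _), Nat.add_sub_cancel_left]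
  have h2 : ((((a:ℕ) + (b:ℕ) + 1)! : ℕ) : ℝ)
      = ((((a:ℕ):ℝ) + ((b:ℕ):ℝ) + 1)) * (((a:ℕ) + (b:ℕ))! : ℝ) := by
    rw [Nat.factorial_succ]
    push_cast
    ring
  have hfa : (((a:ℕ))! : ℝ) ≠ 0 := Nat.cast_ne_zero.2 (Nat.factorial_ne_zero _)
  have hfb : (((b:ℕ))! : ℝ) ≠ 0 := Nat.cast_ne_zero.2 (Nat.factorial_ne_zero _)
  have hfab : ((((a:ℕ) + (b:ℕ)))! : ℝ) ≠ 0 := Nat.cast_ne_zero.2 (Nat.factorial_ne_zero _)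
  have hs : (((a:ℕ):ℝ) + ((b:ℕ):ℝ) + 1) ≠ 0 := by positivity
  unfold kolV
  rw [h1, h2]
  field_simp

set_option maxHeartbeats 1000000 in
lemma kolV_quad (k : ℕ) (x : Fin (k+1) → ℝ) :
    x ⬝ᵥ (kolV k) *ᵥ x
      = ∫ t in (0:ℝ)..1, (∑ a : Fin (k+1), x a / ((a:ℕ)! : ℝ) * t ^ (a:ℕ)) ^ 2 := by
  have hint : ∀ (a b : Fin (k+1)),
      IntervalIntegrable
        (fun t : ℝ => (x a / ((a:ℕ)! : ℝ) * t ^ (a:ℕ)) * (x b / ((b:ℕ)! : ℝ) * t ^ (b:ℕ)))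
        volume 0 1 := by
    intro a b
    exact ((continuous_const.mul (continuous_pow _)).mul
      (continuous_const.mul (continuous_pow _))).intervalIntegrable 0 1
  have hsum : ∀ a : Fin (k+1),
      IntervalIntegrable
        (fun t : ℝ => ∑ b : Fin (k+1),
          (x a / ((a:ℕ)! : ℝ) * t ^ (a:ℕ)) * (x b / ((b:ℕ)! : ℝ) * t ^ (b:ℕ)))
        volume 0 1 := by
    intro a
    have h := IntervalIntegrable.sum (μ := volume) (a := (0:ℝ)) (b := 1) Finset.univ
      (f := fun (b : Fin (k+1)) (t : ℝ) =>
        (x a / ((a:ℕ)! : ℝ) * t ^ (a:ℕ)) * (x b / ((b:ℕ)! : ℝ) * t ^ (b:ℕ)))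
      (fun b _ => hint a b)
    rw [Finset.sum_fn] at h
    exact h
  have : (fun t : ℝ => (∑ a : Fin (k+1), x a / ((a:ℕ)! : ℝ) * t ^ (a:ℕ)) ^ 2)
      = fun t : ℝ => ∑ a : Fin (k+1), ∑ b : Fin (k+1),
          (x a / ((a:ℕ)! : ℝ) * t ^ (a:ℕ)) * (x b / ((b:ℕ)! : ℝ) * t ^ (b:ℕ)) := by
    funext t
    rw [sq, Finset.sum_mul_sum]
  rw [this]
  rw [intervalIntegral.integral_finset_sum
    (f := fun (a : Fin (k+1)) (t : ℝ) => ∑ b : Fin (k+1),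
      (x a / ((a:ℕ)! : ℝ) * t ^ (a:ℕ)) * (x b / ((b:ℕ)! : ℝ) * t ^ (b:ℕ)))
    (fun a _ => hsum a)]
  have hterm : ∀ (a b : Fin (k+1)),
      (∫ t in (0:ℝ)..1, (x a / ((a:ℕ)! : ℝ) * t ^ (a:ℕ)) * (x b / ((b:ℕ)! : ℝ) * t ^ (b:ℕ)))
        = x a * x b * (1 / (((a:ℕ)! : ℝ) * ((b:ℕ)! : ℝ) * (((a:ℕ):ℝ) + ((b:ℕ):ℝ) + 1))) := by
    intro a b
    have : (fun t : ℝ => (x a / ((a:ℕ)! : ℝ) * t ^ (a:ℕ)) * (x b / ((b:ℕ)! : ℝ) * t ^ (b:ℕ)))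
        = fun t : ℝ => (x a / ((a:ℕ)! : ℝ) * (x b / ((b:ℕ)! : ℝ))) * t ^ ((a:ℕ) + (b:ℕ)) := by
      funext t; rw [pow_add]; ring
    rw [this, intervalIntegral.integral_const_mul, integral_pow]
    have hfa : (((a:ℕ))! : ℝ) ≠ 0 := Nat.cast_ne_zero.2 (Nat.factorial_ne_zero _)
    have hfb : (((b:ℕ))! : ℝ) ≠ 0 := Nat.cast_ne_zero.2 (Nat.factorial_ne_zero _)
    have hs : (((a:ℕ):ℝ) + ((b:ℕ):ℝ) + 1) ≠ 0 := by positivity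
    push_cast
    field_simp
    simp
  have : ∀ a : Fin (k+1), (∫ t in (0:ℝ)..1, ∑ b : Fin (k+1),
      (x a / ((a:ℕ)! : ℝ) * t ^ (a:ℕ)) * (x b / ((b:ℕ)! : ℝ) * t ^ (b:ℕ)))
      = ∑ b : Fin (k+1), x a * x b
          * (1 / (((a:ℕ)! : ℝ) * ((b:ℕ)! : ℝ) * (((a:ℕ):ℝ) + ((b:ℕ):ℝ) + 1))) := by
    intro a
    rw [intervalIntegral.integral_finset_sum (fun b _ => hint a b)]
    exact Finset.sum_congr rfl (fun b _ => hterm a b)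
  simp only [this]
  simp only [dotProduct, Matrix.mulVec, dotProduct, kolV_entry,
    Finset.mul_sum]
  congr 1; funext a; congr 1; funext b
  ring

/-- For every natural number `k`, the `(k+1)×(k+1)` real matrix `V` with entries
`V_{a,b} = C(a+b, a)/(a+b+1)!` is symmetric and positive definite. -/
theorem kolV_isSymm_posDef (k : ℕ) : (kolV k).IsSymm ∧ (kolV k).PosDef := by
  have hsymm : (kolV k).IsSymm := by
    ext a b
    rw [Matrix.transpose_apply, kolV_entry, kolV_entry]
    ring
  refine ⟨hsymm, Matrix.posDef_iff_dotProduct_mulVec.2 ⟨?_, ?_⟩⟩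
  · exact hsymm
  · intro x hx
    have hstar : star x = x := rfl
    rw [hstar, kolV_quad]
    -- define the polynomial
    set p : ℝ[X] := ∑ a : Fin (k+1), Polynomial.C (x a / ((a:ℕ)! : ℝ)) * Polynomial.X ^ (a:ℕ)
      with hp
    have heval : ∀ t : ℝ, (∑ a : Fin (k+1), x a / ((a:ℕ)! : ℝ) * t ^ (a:ℕ)) = p.eval t := by
      intro t
      rw [hp, Polynomial.eval_finset_sum]
      simp
    have hpne : p ≠ 0 := by
      intro h
      apply hx
      funext a
      have hc : p.coeff (a:ℕ) = x a / ((a:ℕ)! : ℝ) := by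
        rw [hp, Polynomial.finset_sum_coeff]
        simp only [Polynomial.coeff_C_mul, Polynomial.coeff_X_pow]
        rw [Finset.sum_eq_single a]
        · simp
        · intro b _ hb
          have h2 : (a:ℕ) ≠ (b:ℕ) := fun h' => hb (Fin.ext h'.symm)
          simp [h2]
        · simp
      rw [h] at hc
      simp only [Polynomial.coeff_zero] at hc
      have hfa : (((a:ℕ))! : ℝ) ≠ 0 := Nat.cast_ne_zero.2 (Nat.factorial_ne_zero _)
      have := hc.symm
      field_simp at this
      simpa using this
    simp only [heval]
    -- the integral of the square of a nonzero polynomial is positive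
    have hcont : Continuous fun t : ℝ => (p.eval t) ^ 2 := (Polynomial.continuous p).pow 2
    have hnonneg : ∀ t : ℝ, 0 ≤ (p.eval t) ^ 2 := fun t => sq_nonneg _
    have hii : IntervalIntegrable (fun t : ℝ => (p.eval t) ^ 2) volume 0 1 :=
      hcont.intervalIntegrable 0 1
    have hge : 0 ≤ ∫ t in (0:ℝ)..1, (p.eval t) ^ 2 :=
      intervalIntegral.integral_nonneg (by norm_num) (fun t _ => hnonneg t)
    rcases hge.lt_or_eq with h | h
    · exact h
    -- suppose the integral is zero; derive contradiction
    exfalso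
    have h01 : (0:ℝ) ≤ 1 := by norm_num
    rw [intervalIntegral.integral_of_le h01] at h
    have hzero : (fun t : ℝ => (p.eval t) ^ 2) =ᵐ[volume.restrict (Set.Ioc (0:ℝ) 1)] 0 := by
      rw [← MeasureTheory.setIntegral_eq_zero_iff_of_nonneg_ae
        (Filter.Eventually.of_forall (fun t => hnonneg t))
        (hii.1.mono_set (by simp [Set.uIoc_of_le h01]))]
      exact h.symm
    have hroot : ∀ᵐ t ∂(volume.restrict (Set.Ioc (0:ℝ) 1)), p.IsRoot t := by
      filter_upwards [hzero] with t ht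
      have : (p.eval t) ^ 2 = 0 := ht
      exact pow_eq_zero_iff (by norm_num) |>.mp this
    have hfin : {t : ℝ | p.IsRoot t}.Finite := Polynomial.finite_setOf_isRoot hpne
    have hmeas : volume.restrict (Set.Ioc (0:ℝ) 1) {t : ℝ | ¬ p.IsRoot t} = 0 := hroot
    have : volume.restrict (Set.Ioc (0:ℝ) 1) Set.univ ≤
        volume.restrict (Set.Ioc (0:ℝ) 1) {t : ℝ | p.IsRoot t}
          + volume.restrict (Set.Ioc (0:ℝ) 1) {t : ℝ | ¬ p.IsRoot t} := by
      refine le_trans (measure_mono ?_) (measure_union_le _ _)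
      intro t _
      by_cases hpt : p.IsRoot t
      · exact Or.inl hpt
      · exact Or.inr hpt
    have hr : volume.restrict (Set.Ioc (0:ℝ) 1) {t : ℝ | p.IsRoot t} = 0 := by
      refine le_antisymm ?_ zero_le
      calc volume.restrict (Set.Ioc (0:ℝ) 1) {t : ℝ | p.IsRoot t}
          ≤ volume {t : ℝ | p.IsRoot t} := MeasureTheory.Measure.restrict_le_self _
        _ = 0 := hfin.measure_zero _
    rw [hmeas, hr] at this
    simp only [add_zero] at this
    rw [MeasureTheory.Measure.restrict_apply_univ] at this
    simp [Real.volume_Ioc] at this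
end

section
/- For every a > 0 and every t ≥ 1, (6^{1/3} a e^{−2a³/9}/Γ(1/3)) · t^{−1/3} ≤ ∫_t^∞ (2^{1/3}/(3^{2/3} Γ(1/3))) · (a/u^{4/3}) · exp(−2a³/(9u)) du ≤ (6^{1/3} a/Γ(1/3)) · t^{−1/3}. -/
open Real MeasureTheory Set

/-- Tail bounds for the Kearney–Majumdar area density: for `a > 0` and `t ≥ 1`,
`(6^{1/3} a e^{−2a³/9}/Γ(1/3)) t^{−1/3} ≤ ∫_t^∞ (2^{1/3}/(3^{2/3} Γ(1/3))) (a/u^{4/3}) e^{−2a³/(9u)} du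
  ≤ (6^{1/3} a/Γ(1/3)) t^{−1/3}`. -/
theorem kearney_majumdar_tail (a : ℝ) (ha : 0 < a) (t : ℝ) (ht : 1 ≤ t) :
    (6 ^ ((1:ℝ) / 3) * a * Real.exp (-(2 * a ^ 3) / 9) / Real.Gamma (1 / 3)) *
        t ^ (-(1:ℝ) / 3) ≤
      (∫ u in Set.Ioi t,
        (2 ^ ((1:ℝ) / 3) / (3 ^ ((2:ℝ) / 3) * Real.Gamma (1 / 3))) *
          (a / u ^ ((4:ℝ) / 3)) * Real.exp (-(2 * a ^ 3) / (9 * u))) ∧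
    (∫ u in Set.Ioi t,
        (2 ^ ((1:ℝ) / 3) / (3 ^ ((2:ℝ) / 3) * Real.Gamma (1 / 3))) *
          (a / u ^ ((4:ℝ) / 3)) * Real.exp (-(2 * a ^ 3) / (9 * u))) ≤
      (6 ^ ((1:ℝ) / 3) * a / Real.Gamma (1 / 3)) * t ^ (-(1:ℝ) / 3) := by
  have ht0 : (0:ℝ) < t := lt_of_lt_of_le one_pos ht
  set K : ℝ := 2 ^ ((1:ℝ) / 3) / (3 ^ ((2:ℝ) / 3) * Real.Gamma (1 / 3)) with hKdef
  have hG : 0 < Real.Gamma (1/3) := Real.Gamma_pos_of_pos (by norm_num)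
  have h32 : (0:ℝ) < (3:ℝ) ^ ((2:ℝ)/3) := Real.rpow_pos_of_pos (by norm_num) _
  have hK : 0 < K := div_pos (Real.rpow_pos_of_pos (by norm_num) _) (mul_pos h32 hG)
  -- key constant identity
  have h3K : 3 * K = 6 ^ ((1:ℝ)/3) / Real.Gamma (1/3) := by
    have h6 : (6:ℝ) ^ ((1:ℝ)/3) = 2 ^ ((1:ℝ)/3) * 3 ^ ((1:ℝ)/3) := by
      rw [show (6:ℝ) = 2 * 3 by norm_num, Real.mul_rpow (by norm_num) (by norm_num)]
    have h3 : (3:ℝ) ^ ((1:ℝ)/3) * 3 ^ ((2:ℝ)/3) = 3 := by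
      rw [← Real.rpow_add (by norm_num)]
      norm_num
    rw [hKdef, h6]
    field_simp
    linear_combination (-1) * h3
  -- integrability of the power function
  have hpow : IntegrableOn (fun u : ℝ => u ^ (-(4:ℝ)/3)) (Ioi t) :=
    integrableOn_Ioi_rpow_of_lt (by norm_num) ht0
  have hpowval : ∫ u in Ioi t, u ^ (-(4:ℝ)/3) = 3 * t ^ (-(1:ℝ)/3) := by
    rw [integral_Ioi_rpow_of_lt (by norm_num) ht0]
    rw [show (-(4:ℝ)/3 + 1) = -1/3 by norm_num]
    ring
  -- rewrite integrand with rpow_neg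
  have hf_eq : ∀ u ∈ Ioi t, K * (a / u ^ ((4:ℝ)/3)) * Real.exp (-(2 * a ^ 3) / (9 * u))
      = (K * a) * (u ^ (-(4:ℝ)/3) * Real.exp (-(2 * a ^ 3) / (9 * u))) := by
    intro u hu
    have hu0 : 0 < u := lt_trans ht0 hu
    have hne : u ^ ((4:ℝ)/3) ≠ 0 := (Real.rpow_pos_of_pos hu0 _).ne'
    rw [show (-(4:ℝ)/3) = -((4:ℝ)/3) by norm_num, Real.rpow_neg hu0.le]
    field_simp
  set c : ℝ := -(2 * a ^ 3) / 9 with hc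
  set f : ℝ → ℝ := fun u => K * (a / u ^ ((4:ℝ)/3)) * Real.exp (-(2 * a ^ 3) / (9 * u)) with hf
  have hexp_le : ∀ u ∈ Ioi t, Real.exp (-(2 * a ^ 3) / (9 * u)) ≤ 1 := by
    intro u hu
    have hu0 : (0:ℝ) < u := lt_trans ht0 hu
    rw [Real.exp_le_one_iff]
    apply div_nonpos_of_nonpos_of_nonneg
    · nlinarith [pow_pos ha 3]
    · positivity
  have hexp_ge : ∀ u ∈ Ioi t, Real.exp c ≤ Real.exp (-(2 * a ^ 3) / (9 * u)) := by
    intro u hu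
    have hu1 : (1:ℝ) ≤ u := le_trans ht hu.le
    have hu0 : (0:ℝ) < u := lt_of_lt_of_le one_pos hu1
    apply Real.exp_le_exp.2
    rw [hc, neg_div, neg_div, neg_le_neg_iff]
    apply div_le_div_of_nonneg_left (by positivity) (by norm_num)
    linarith
  have hmeas : AEStronglyMeasurable f (volume.restrict (Ioi t)) := by
    apply Measurable.aestronglyMeasurable
    fun_prop
  have hf_int : IntegrableOn f (Ioi t) := by
    apply Integrable.mono' (hpow.const_mul (K * a)) hmeas
    filter_upwards [MeasureTheory.ae_restrict_mem measurableSet_Ioi] with u hu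
    have hu0 : (0:ℝ) < u := lt_trans ht0 hu
    have h1 : 0 ≤ f u := by
      rw [hf]
      positivity
    rw [Real.norm_of_nonneg h1]
    simp only [hf]
    rw [hf_eq u hu]
    have h1' := hexp_le u hu
    have hp : 0 ≤ u ^ (-(4:ℝ)/3) := (Real.rpow_pos_of_pos hu0 _).le
    have h2 : u ^ (-(4:ℝ)/3) * Real.exp (-(2 * a ^ 3) / (9 * u)) ≤ u ^ (-(4:ℝ)/3) :=
      mul_le_of_le_one_right hp h1'
    exact mul_le_mul_of_nonneg_left h2 (by positivity)
  have hlo_int : IntegrableOn (fun u : ℝ => (K * a * Real.exp c) * u ^ (-(4:ℝ)/3)) (Ioi t) :=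
    hpow.const_mul _
  have hhi_int : IntegrableOn (fun u : ℝ => (K * a) * u ^ (-(4:ℝ)/3)) (Ioi t) :=
    hpow.const_mul _
  have hlo : ∫ u in Ioi t, (K * a * Real.exp c) * u ^ (-(4:ℝ)/3) ≤ ∫ u in Ioi t, f u := by
    apply setIntegral_mono_on hlo_int hf_int measurableSet_Ioi
    intro u hu
    have hu0 : (0:ℝ) < u := lt_trans ht0 hu
    have hp : 0 < u ^ (-(4:ℝ)/3) := Real.rpow_pos_of_pos hu0 _
    simp only [hf]
    rw [hf_eq u hu]
    have h2 : u ^ (-(4:ℝ)/3) * Real.exp c ≤ u ^ (-(4:ℝ)/3) * Real.exp (-(2 * a ^ 3) / (9 * u)) :=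
      mul_le_mul_of_nonneg_left (hexp_ge u hu) hp.le
    calc K * a * Real.exp c * u ^ (-(4:ℝ)/3) = K * a * (u ^ (-(4:ℝ)/3) * Real.exp c) := by ring
      _ ≤ K * a * (u ^ (-(4:ℝ)/3) * Real.exp (-(2 * a ^ 3) / (9 * u))) :=
          mul_le_mul_of_nonneg_left h2 (by positivity)
  have hhi : ∫ u in Ioi t, f u ≤ ∫ u in Ioi t, (K * a) * u ^ (-(4:ℝ)/3) := by
    apply setIntegral_mono_on hf_int hhi_int measurableSet_Ioi
    intro u hu
    have hu0 : (0:ℝ) < u := lt_trans ht0 hu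
    have hp : 0 < u ^ (-(4:ℝ)/3) := Real.rpow_pos_of_pos hu0 _
    simp only [hf]
    rw [hf_eq u hu]
    have hp' : 0 ≤ u ^ (-(4:ℝ)/3) := hp.le
    have h2 : u ^ (-(4:ℝ)/3) * Real.exp (-(2 * a ^ 3) / (9 * u)) ≤ u ^ (-(4:ℝ)/3) :=
      mul_le_of_le_one_right hp' (hexp_le u hu)
    exact mul_le_mul_of_nonneg_left h2 (by positivity)
  rw [MeasureTheory.integral_const_mul, hpowval] at hlo hhi
  constructor
  · refine le_trans (le_of_eq ?_) hlo
    rw [hc]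
    linear_combination (-(a * Real.exp (-(2 * a ^ 3) / 9) * t ^ (-(1:ℝ)/3))) * h3K
  · refine le_trans hhi (le_of_eq ?_)
    linear_combination (a * t ^ (-(1:ℝ)/3)) * h3K
end

section
/- Let (Y_k)_{k≥0} be nonnegative random variables on a probability space (not assumed independent) such that, for some constant C > 0, P(Y_k > s) ≤ C · (2^k s)^{−1/3} for every k ≥ 0 and every s > 0. Then for every t > 0, P( Σ_{k=0}^∞ Y_k > t ) ≤ C · (√2/(√2−1))^{1/3} · (1 − 2^{−1/6})^{−1} · t^{−1/3}. -/
open MeasureTheory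

/-- Boole's-inequality tail estimate: if nonnegative random variables `Y_k` satisfy
`P(Y_k > s) ≤ C (2^k s)^{−1/3}` for all `k` and `s > 0`, then for every `t > 0`,
`P(Σ_k Y_k > t) ≤ C (√2/(√2−1))^{1/3} (1 − 2^{−1/6})⁻¹ t^{−1/3}`. -/
theorem tail_sum_bound {Ω : Type*} [MeasurableSpace Ω] (P : Measure Ω)
    [IsProbabilityMeasure P] (Y : ℕ → Ω → ℝ)
    (hYmeas : ∀ k, Measurable (Y k))
    (hYnonneg : ∀ k ω, 0 ≤ Y k ω)
    (C : ℝ) (hC : 0 < C)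
    (htail : ∀ (k : ℕ) (s : ℝ), 0 < s →
      P {ω | s < Y k ω} ≤ ENNReal.ofReal (C * ((2 ^ k * s) ^ (-(1:ℝ) / 3))))
    (t : ℝ) (ht : 0 < t) :
    P {ω | ENNReal.ofReal t < ∑' k, ENNReal.ofReal (Y k ω)} ≤
      ENNReal.ofReal (C * (Real.sqrt 2 / (Real.sqrt 2 - 1)) ^ ((1:ℝ) / 3) *
        (1 - 2 ^ (-(1:ℝ) / 6))⁻¹ * t ^ (-(1:ℝ) / 3)) := by
  have two_pos : (0:ℝ) < 2 := by norm_num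
  set r : ℝ := (2:ℝ) ^ (-(1:ℝ)/2) with hr_def
  set q : ℝ := (2:ℝ) ^ (-(1:ℝ)/6) with hq_def
  have hr_pos : 0 < r := Real.rpow_pos_of_pos two_pos _
  have hr_lt : r < 1 := Real.rpow_lt_one_of_one_lt_of_neg one_lt_two (by norm_num)
  have hq_pos : 0 < q := Real.rpow_pos_of_pos two_pos _
  have hq_lt : q < 1 := Real.rpow_lt_one_of_one_lt_of_neg one_lt_two (by norm_num)
  set a : ℝ := 1 - r with ha_def
  have ha_pos : 0 < a := by simp only [ha_def]; linarith
  set tk : ℕ → ℝ := fun k => t * a * r ^ k with htk_def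
  have htk_pos : ∀ k, 0 < tk k := fun k => by
    simp only [htk_def]; positivity
  have hsummable : Summable (fun k : ℕ => t * a * r ^ k) :=
    (summable_geometric_of_lt_one hr_pos.le hr_lt).mul_left (t * a)
  have hsum_tk : ∑' k, tk k = t := by
    simp only [htk_def]
    rw [tsum_mul_left, tsum_geometric_of_lt_one hr_pos.le hr_lt, ← ha_def,
      mul_assoc, mul_inv_cancel₀ ha_pos.ne', mul_one]
  -- inclusion
  have hsub : {ω | ENNReal.ofReal t < ∑' k, ENNReal.ofReal (Y k ω)} ⊆
      ⋃ k, {ω | tk k < Y k ω} := by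
    intro ω hω
    by_contra hc
    simp only [Set.mem_iUnion, Set.mem_setOf_eq, not_exists, not_lt] at hc
    have hle : ∑' k, ENNReal.ofReal (Y k ω) ≤ ENNReal.ofReal t := by
      calc ∑' k, ENNReal.ofReal (Y k ω) ≤ ∑' k, ENNReal.ofReal (tk k) :=
            ENNReal.tsum_le_tsum fun k => ENNReal.ofReal_le_ofReal (hc k)
        _ = ENNReal.ofReal (∑' k, tk k) :=
            (ENNReal.ofReal_tsum_of_nonneg (fun k => (htk_pos k).le) hsummable).symm
        _ = ENNReal.ofReal t := by rw [hsum_tk]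
    exact absurd hω (not_lt.mpr hle)
  -- pointwise identity for the tail bound
  have key : ∀ k : ℕ, ((2:ℝ) ^ k * tk k) ^ (-(1:ℝ)/3)
      = (t * a) ^ (-(1:ℝ)/3) * q ^ k := by
    intro k
    have h2r : (2:ℝ) * r = (2:ℝ) ^ ((1:ℝ)/2) := by
      rw [hr_def]
      calc (2:ℝ) * 2 ^ (-(1:ℝ)/2) = 2 ^ (1:ℝ) * 2 ^ (-(1:ℝ)/2) := by
            rw [Real.rpow_one]
        _ = 2 ^ ((1:ℝ) + -(1:ℝ)/2) := (Real.rpow_add two_pos _ _).symm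
        _ = 2 ^ ((1:ℝ)/2) := by norm_num
    have h1 : (2:ℝ) ^ k * tk k = (t * a) * ((2:ℝ) ^ ((1:ℝ)/2)) ^ k := by
      simp only [htk_def]
      rw [← h2r, mul_pow]
      ring
    rw [h1, Real.mul_rpow (by positivity) (by positivity)]
    congr 1
    rw [← Real.rpow_natCast ((2:ℝ) ^ ((1:ℝ)/2)) k, ← Real.rpow_mul two_pos.le,
      ← Real.rpow_mul two_pos.le, hq_def, ← Real.rpow_natCast ((2:ℝ) ^ (-(1:ℝ)/6)) k,
      ← Real.rpow_mul two_pos.le]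
    ring_nf
  -- sum of the bounds
  have hsum_bound : ∑' k, ENNReal.ofReal (C * ((2:ℝ) ^ k * tk k) ^ (-(1:ℝ)/3))
      = ENNReal.ofReal (C * (t * a) ^ (-(1:ℝ)/3) * (1 - q)⁻¹) := by
    have : ∀ k : ℕ, C * ((2:ℝ) ^ k * tk k) ^ (-(1:ℝ)/3)
        = (C * (t * a) ^ (-(1:ℝ)/3)) * q ^ k := by
      intro k; rw [key k]; ring
    simp only [this]
    rw [← ENNReal.ofReal_tsum_of_nonneg (fun k => by positivity)
      ((summable_geometric_of_lt_one hq_pos.le hq_lt).mul_left _),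
      tsum_mul_left, tsum_geometric_of_lt_one hq_pos.le hq_lt, mul_assoc]
  -- identify the constant
  have hconst : C * (t * a) ^ (-(1:ℝ)/3) * (1 - q)⁻¹
      = C * (Real.sqrt 2 / (Real.sqrt 2 - 1)) ^ ((1:ℝ)/3) * (1 - q)⁻¹ * t ^ (-(1:ℝ)/3) := by
    have hs2 : (1:ℝ) < Real.sqrt 2 := by
      rw [show (1:ℝ) = Real.sqrt 1 by simp]
      exact Real.sqrt_lt_sqrt (by norm_num) (by norm_num)
    have hs2pos : (0:ℝ) < Real.sqrt 2 := by linarith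
    have hainv : a⁻¹ = Real.sqrt 2 / (Real.sqrt 2 - 1) := by
      have hr_eq : r = (Real.sqrt 2)⁻¹ := by
        rw [hr_def, show -(1:ℝ)/2 = -((1:ℝ)/2) by ring, Real.rpow_neg two_pos.le,
          ← Real.sqrt_eq_rpow]
      rw [ha_def, hr_eq, eq_div_iff (by linarith)]
      field_simp
      rw [div_self (sub_ne_zero.mpr hs2.ne')]
    have ha13 : a ^ (-(1:ℝ)/3) = (Real.sqrt 2 / (Real.sqrt 2 - 1)) ^ ((1:ℝ)/3) := by
      rw [← hainv, show -(1:ℝ)/3 = -((1:ℝ)/3) by ring, Real.rpow_neg ha_pos.le,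
        ← Real.inv_rpow ha_pos.le]
    rw [Real.mul_rpow ht.le ha_pos.le, ha13]
    ring
  calc P {ω | ENNReal.ofReal t < ∑' k, ENNReal.ofReal (Y k ω)}
      ≤ P (⋃ k, {ω | tk k < Y k ω}) := measure_mono hsub
    _ ≤ ∑' k, P {ω | tk k < Y k ω} := measure_iUnion_le _
    _ ≤ ∑' k, ENNReal.ofReal (C * ((2:ℝ) ^ k * tk k) ^ (-(1:ℝ)/3)) :=
        ENNReal.tsum_le_tsum fun k => htail k (tk k) (htk_pos k)
    _ = ENNReal.ofReal (C * (t * a) ^ (-(1:ℝ)/3) * (1 - q)⁻¹) := hsum_bound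
    _ = ENNReal.ofReal (C * (Real.sqrt 2 / (Real.sqrt 2 - 1)) ^ ((1:ℝ)/3) *
        (1 - q)⁻¹ * t ^ (-(1:ℝ)/3)) := by rw [hconst]
end
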